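/- Let f be a ternary cubic with real coefficients and suppose c ∈ ℝ satisfies (1/2)·Σ_{p,q=1}^{3} B_{pq}·∂²B_{ij}/∂x_p∂x_q = c·x_i·x_j for all i, j. Let x ∈ ℝ³ be a point at which H(x) ≠ 0, and set g_{ij} = −f_{ij}(x)/6, h = det(g_{ij}), let (g^{pq}) be the inverse matrix of (g_{ij}), and define R_{ijkl} = −(1/144)·Σ_{p,q=1}^{3} g^{pq}·(f_{jlp} f_{ikq} − f_{ilp} f_{jkq}), where f_{ijk} = ∂³f/∂x_i∂x_j∂x_k are the (constant) third partials of f. Then −4h·R_{1212} = 6^{−4}·c·x₃² and 4h·R_{1323} = 6^{−4}·c·x₁·x₂. -/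

import Mathlib

set_option maxHeartbeats 1000000

open MvPolynomial

lemma pd_comm' {σ : Type*} [DecidableEq σ] (i j : σ) (p : MvPolynomial σ ℝ) :
    pderiv i (pderiv j p) = pderiv j (pderiv i p) := by
  induction p using MvPolynomial.induction_on with
  | C a => simp [pderiv_C]
  | add p q hp hq => simp [map_add, hp, hq]
  | mul_X p n ih =>
    simp only [pderiv_mul, map_add, ih, pderiv_X, Pi.single_apply]
    split_ifs <;> simp <;> ring

lemma pderiv_isHomogeneous' {σ : Type*} [DecidableEq σ] {p : MvPolynomial σ ℝ} {n : ℕ}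
    (hp : p.IsHomogeneous (n+1)) (i : σ) : (pderiv i p).IsHomogeneous n := by
  rw [p.as_sum, map_sum]
  apply IsHomogeneous.sum
  intro d hd
  rw [pderiv_monomial]
  rcases Nat.eq_zero_or_pos (d i) with h0 | hpos
  · simp [h0]
    exact isHomogeneous_zero _ _ _
  · apply isHomogeneous_monomial
    have hdd : Finsupp.degree d = n + 1 := by
      by_contra hne
      exact (mem_support_iff.mp hd) (hp.coeff_eq_zero hne)
    have hle : Finsupp.single i 1 ≤ d := by rwa [Finsupp.single_le_iff]
    have h1 : (d - Finsupp.single i 1) + Finsupp.single i 1 = d := tsub_add_cancel_of_le hle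
    have hdeg : Finsupp.degree (d - Finsupp.single i 1) + Finsupp.degree (Finsupp.single i 1)
        = n + 1 := by
      rw [← hdd, ← h1]; simp [Finsupp.degree_eq_weight_one, map_add]
    have hs : Finsupp.degree (Finsupp.single i (1:ℕ)) = 1 := by
      exact Finsupp.degree_single i 1
    omega

lemma pderiv_of_homog_zero' {σ : Type*} [DecidableEq σ] {p : MvPolynomial σ ℝ}
    (hp : p.IsHomogeneous 0) (i : σ) : pderiv i p = 0 := by
  rw [p.as_sum, map_sum]
  apply Finset.sum_eq_zero
  intro d hd
  have hdd : Finsupp.degree d = 0 := by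
    by_contra hne
    exact (mem_support_iff.mp hd) (hp.coeff_eq_zero hne)
  have : d = 0 := (Finsupp.degree_eq_zero_iff d).mp hdd
  subst this
  simp [pderiv_monomial]

lemma pd2mul' (f : MvPolynomial (Fin 3) ℝ)
    (h4 : ∀ i j k l : Fin 3, pderiv i (pderiv j (pderiv k (pderiv l f))) = 0)
    (a b c d p q : Fin 3) :
    pderiv p (pderiv q ((pderiv a (pderiv b f)) * (pderiv c (pderiv d f)))) =
      pderiv q (pderiv a (pderiv b f)) * pderiv p (pderiv c (pderiv d f))
      + pderiv p (pderiv a (pderiv b f)) * pderiv q (pderiv c (pderiv d f)) := by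
  simp [pderiv_mul, h4]
  ring

noncomputable section

/-- The Hessian matrix of second partial derivatives of `f`. -/
def hessian (f : MvPolynomial (Fin 3) ℝ) : Matrix (Fin 3) (Fin 3) (MvPolynomial (Fin 3) ℝ) :=
  fun i j => pderiv i (pderiv j f)

/-- The adjugate (cofactor) matrix of the Hessian matrix of `f`. -/
def Bmat (f : MvPolynomial (Fin 3) ℝ) : Matrix (Fin 3) (Fin 3) (MvPolynomial (Fin 3) ℝ) :=
  (hessian f).adjugate

/-- The matrix `g_{ij} = -f_{ij}(x)/6` of the Hessian pseudo-Riemannian metric at `x`. -/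
def gmat (f : MvPolynomial (Fin 3) ℝ) (x : Fin 3 → ℝ) : Matrix (Fin 3) (Fin 3) ℝ :=
  fun i j => -(eval x (pderiv i (pderiv j f))) / 6

/-- The (constant) third partial derivatives `f_{ijk}` of `f`. -/
def thirdPartial (f : MvPolynomial (Fin 3) ℝ) (x : Fin 3 → ℝ) (i j k : Fin 3) : ℝ :=
  eval x (pderiv i (pderiv j (pderiv k f)))

/-- The components `R_{ijkl}` of the curvature tensor of the Hessian metric (Totaro's
formula): `R_{ijkl} = -(1/144) ∑_{p,q} g^{pq} (f_{jlp} f_{ikq} - f_{ilp} f_{jkq})`. -/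
def curv (f : MvPolynomial (Fin 3) ℝ) (x : Fin 3 → ℝ) (i j k l : Fin 3) : ℝ :=
  -(1/144) * ∑ p : Fin 3, ∑ q : Fin 3,
    (gmat f x)⁻¹ p q *
      (thirdPartial f x j l p * thirdPartial f x i k q -
        thirdPartial f x i l p * thirdPartial f x j k q)

/-- If `(1/2) ∑_{p,q} B_{pq} ∂²B_{ij}/∂x_p∂x_q = c x_i x_j` for all `i, j`, and `x` is a
point where the Hessian determinant does not vanish, then, with `h = det (g_{ij})`,
`-4h R₁₂₁₂ = 6⁻⁴ c x₃²` and `4h R₁₃₂₃ = 6⁻⁴ c x₁ x₂`. -/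
theorem stmt3 (f : MvPolynomial (Fin 3) ℝ) (hf : f.IsHomogeneous 3) (c : ℝ)
    (hc : ∀ i j : Fin 3,
      C (1/2 : ℝ) * ∑ p : Fin 3, ∑ q : Fin 3,
          Bmat f p q * pderiv p (pderiv q (Bmat f i j)) =
        C c * X i * X j)
    (x : Fin 3 → ℝ) (hx : eval x (hessian f).det ≠ 0) :
    -4 * (gmat f x).det * curv f x 0 1 0 1 = ((6 : ℝ) ^ 4)⁻¹ * c * (x 2) ^ 2 ∧
    4 * (gmat f x).det * curv f x 0 2 1 2 = ((6 : ℝ) ^ 4)⁻¹ * c * (x 0 * x 1) := by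
  have h4 : ∀ i j k l : Fin 3, pderiv i (pderiv j (pderiv k (pderiv l f))) = 0 := fun i j k l =>
    pderiv_of_homog_zero'
      (pderiv_isHomogeneous' (pderiv_isHomogeneous' (pderiv_isHomogeneous' hf l) k) j) i
  have hdet : (gmat f x).det = -(1/216) * eval x (hessian f).det := by
    rw [Matrix.det_fin_three, Matrix.det_fin_three]
    simp [gmat, hessian]
    ring
  have hdg : (gmat f x).det ≠ 0 := by
    rw [hdet]; intro h
    rcases mul_eq_zero.mp h with h1 | h2
    · norm_num at h1
    · exact hx h2
  set d := (gmat f x).det with hd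
  have hid : d * d⁻¹ = 1 := mul_inv_cancel₀ hdg
  constructor
  · have E1 := congrArg (eval x) (hc 2 2)
    simp [Fin.sum_univ_three, Bmat, hessian, Matrix.adjugate_fin_three, pd2mul' f h4, h4,
      pd_comm'] at E1
    simp only [curv, thirdPartial, Fin.sum_univ_three, Matrix.inv_def, Ring.inverse_eq_inv',
      Matrix.smul_apply, smul_eq_mul, ← hd]
    simp [Matrix.adjugate_fin_three, gmat, pd_comm']
    linear_combination ((d * d⁻¹) / 1296) * E1 + (c * x 2 * x 2 / 1296) * hid
  · have E2 := congrArg (eval x) (hc 0 1)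
    simp [Fin.sum_univ_three, Bmat, hessian, Matrix.adjugate_fin_three, pd2mul' f h4, h4,
      pd_comm'] at E2
    simp only [curv, thirdPartial, Fin.sum_univ_three, Matrix.inv_def, Ring.inverse_eq_inv',
      Matrix.smul_apply, smul_eq_mul, ← hd]
    simp [Matrix.adjugate_fin_three, gmat, pd_comm']
    linear_combination ((d * d⁻¹) / 1296) * E2 + (c * x 0 * x 1 / 1296) * hid
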